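/- Telescoped gradient-sum bound in the nonconvex analysis: under Assumption 3 with stepsize η = 1/(3KLρ), combining the descent inequality e_{t+1} ≤ e_t − (η/3)h_t + (2η/3)L²V_t with the consensus bound V_t ≤ 3η²Kρ∑_{j=τ(t)}^{t−1} h_j yields (1/3)η∑_{t=0}^{T−1} h_t ≤ e_0 + (2/9)η∑_{t=0}^{T−1} h_t, and therefore (1/T)∑_{t=0}^{T−1} h_t ≤ 27KLρ·e_0/T, where e_t = E[f(x̄^{(t)})] − f*, h_t = E‖∇f(x̄^{(t)})‖², V_t = (1/n)∑_i E‖x_i^{(t)} − x̄^{(t)}‖², and τ(t) is the last communication time at or before t. -/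

import Mathlib

open MeasureTheory ProbabilityTheory
open scoped RealInnerProductSpace

lemma lip_descent {d : ℕ} (φ : EuclideanSpace ℝ (Fin d) → ℝ)
    (G : EuclideanSpace ℝ (Fin d) → EuclideanSpace ℝ (Fin d)) (C : ℝ)
    (hG : ∀ x, HasGradientAt φ (G x) x)
    (hLip : ∀ p q, ‖G p - G q‖ ≤ C * ‖p - q‖) (x y : EuclideanSpace ℝ (Fin d)) :
    φ y ≤ φ x + ⟪G x, y - x⟫ + C / 2 * ‖y - x‖ ^ 2 := by
  set v := y - x with hv
  set u : ℝ → ℝ := fun t => φ (x + t • v) with hu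
  have hpath : ∀ t : ℝ, HasDerivAt (fun t : ℝ => x + t • v) v t := fun t => by
    simpa using ((hasDerivAt_id t).smul_const v).const_add x
  have hderiv : ∀ t : ℝ, HasDerivAt u (⟪G (x + t • v), v⟫) t := by
    intro t
    have h1 := (hG (x + t • v)).hasFDerivAt.comp_hasDerivAt t (hpath t)
    exact h1
  set w : ℝ → ℝ := fun t => φ x + t * ⟪G x, v⟫ + C / 2 * t ^ 2 * ‖v‖ ^ 2 - u t with hw
  have hwderiv : ∀ t : ℝ, HasDerivAt w
      (⟪G x, v⟫ + C * t * ‖v‖ ^ 2 - ⟪G (x + t • v), v⟫) t := by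
    intro t
    have h1 : HasDerivAt (fun t : ℝ => φ x + t * ⟪G x, v⟫ + C / 2 * t ^ 2 * ‖v‖ ^ 2)
        (⟪G x, v⟫ + C * t * ‖v‖ ^ 2) t := by
      have := (((hasDerivAt_id t).mul_const (⟪G x, v⟫)).const_add (φ x)).add
        ((((hasDerivAt_id t).pow 2).const_mul (C / 2)).mul_const (‖v‖ ^ 2))
      refine this.congr_deriv ?_
      simp only [id]
      ring
    exact h1.sub (hderiv t)
  have hmono : MonotoneOn w (Set.Ici (0 : ℝ)) := by
    apply monotoneOn_of_deriv_nonneg (convex_Ici 0)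
    · exact Continuous.continuousOn (by
        have : Continuous u := by
          have : Differentiable ℝ u := fun t => (hderiv t).differentiableAt
          exact this.continuous
        fun_prop)
    · intro t ht
      exact ((hwderiv t).differentiableAt).differentiableWithinAt
    · intro t ht
      rw [interior_Ici] at ht
      rw [(hwderiv t).deriv]
      have h2 : ⟪G (x + t • v), v⟫ - ⟪G x, v⟫ ≤ C * t * ‖v‖ ^ 2 := by
        have h3 : ⟪G (x + t • v) - G x, v⟫ ≤ ‖G (x + t • v) - G x‖ * ‖v‖ :=
          real_inner_le_norm _ _
        have h4 : ‖G (x + t • v) - G x‖ ≤ C * (t * ‖v‖) := by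
          have := hLip (x + t • v) x
          simpa [norm_smul, abs_of_nonneg (le_of_lt (Set.mem_Ioi.mp ht))] using this
        have h5 : ⟪G (x + t • v) - G x, v⟫ ≤ C * (t * ‖v‖) * ‖v‖ :=
          h3.trans (by
            apply mul_le_mul_of_nonneg_right h4 (norm_nonneg v))
        rw [inner_sub_left] at h5
        nlinarith [h5]
      linarith
  have h01 : w 0 ≤ w 1 := hmono (by simp) (by norm_num) (by norm_num)
  have hw0 : w 0 = φ x - φ x := by simp [hw, hu]
  have hw1 : w 1 = φ x + ⟪G x, v⟫ + C / 2 * ‖v‖ ^ 2 - φ y := by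
    simp [hw, hu, hv]
  rw [hw0, hw1] at h01
  linarith

lemma grad_eq_of_quad {d : ℕ} (f : EuclideanSpace ℝ (Fin d) → ℝ)
    (x G₀ grad : EuclideanSpace ℝ (Fin d)) (C : ℝ)
    (hgrad : HasGradientAt f grad x)
    (hquad : ∀ y, |f y - f x - ⟪G₀, y - x⟫| ≤ C * ‖y - x‖ ^ 2) : grad = G₀ := by
  have hG0 : HasGradientAt f G₀ x := by
    rw [hasGradientAt_iff_isLittleO]
    have h1 : (fun y => f y - f x - ⟪G₀, y - x⟫) =O[nhds x] (fun y => ‖y - x‖ ^ 2) :=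
      Asymptotics.isBigO_iff.2 ⟨C, Filter.Eventually.of_forall fun y => by
        simpa [abs_of_nonneg (sq_nonneg ‖y - x‖)] using hquad y⟩
    refine h1.trans_isLittleO ?_
    rw [Asymptotics.isLittleO_iff]
    intro c hc
    have htend : Filter.Tendsto (fun y => ‖y - x‖) (nhds x) (nhds 0) := by
      have : Filter.Tendsto (fun y : EuclideanSpace ℝ (Fin d) => y - x) (nhds x) (nhds (x - x)) :=
        (continuous_id.sub continuous_const).tendsto x
      rw [sub_self] at this
      simpa using this.norm
    have hev : ∀ᶠ y in nhds x, ‖y - x‖ < c := htend.eventually_lt_const hc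
    filter_upwards [hev] with y hy
    have h0 : (0:ℝ) ≤ ‖y - x‖ := norm_nonneg _
    have : ‖y - x‖ ^ 2 ≤ c * ‖y - x‖ := by nlinarith
    simpa [abs_of_nonneg (sq_nonneg ‖y - x‖)] using this
  exact hgrad.unique hG0

lemma count_aux (K T : ℕ) (hK : 0 < K) (τ : ℕ → ℕ) (hτ : ∀ t, τ t = K * (t / K))
    (h : ℕ → ℝ) (hpos : ∀ t, 0 ≤ h t) :
    ∑ t ∈ Finset.range T, ∑ j ∈ Finset.Ico (τ t) t, h j
      ≤ K * ∑ j ∈ Finset.range T, h j := by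
  have step1 : ∀ t ∈ Finset.range T,
      ∑ j ∈ Finset.Ico (τ t) t, h j
        = ∑ j ∈ Finset.range T, if j ∈ Finset.Ico (τ t) t then h j else 0 := by
    intro t ht
    rw [Finset.sum_ite_mem]
    congr 1
    symm
    rw [Finset.inter_eq_right]
    intro j hj
    rw [Finset.mem_Ico] at hj
    rw [Finset.mem_range] at ht ⊢
    omega
  rw [Finset.sum_congr rfl step1, Finset.sum_comm]
  have step2 : ∀ j ∈ Finset.range T,
      (∑ t ∈ Finset.range T, if j ∈ Finset.Ico (τ t) t then h j else 0) ≤ K * h j := by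
    intro j _
    rw [← Finset.sum_filter, Finset.sum_const]
    have hcard : ((Finset.range T).filter (fun t => j ∈ Finset.Ico (τ t) t)).card ≤ K := by
      have hsub : (Finset.range T).filter (fun t => j ∈ Finset.Ico (τ t) t)
          ⊆ Finset.Ico (j + 1) (j + K) := by
        intro t ht
        rw [Finset.mem_filter, Finset.mem_range] at ht
        obtain ⟨_, hmem⟩ := ht
        rw [Finset.mem_Ico] at hmem
        have h1 : t < τ t + K := by
          rw [hτ t, Nat.mul_comm]
          exact Nat.lt_div_mul_add hK
        rw [Finset.mem_Ico]
        omega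
      calc ((Finset.range T).filter _).card ≤ (Finset.Ico (j + 1) (j + K)).card :=
            Finset.card_le_card hsub
        _ ≤ K := by rw [Nat.card_Ico]; omega
    calc (((Finset.range T).filter (fun t => j ∈ Finset.Ico (τ t) t)).card : ℕ) • h j
          ≤ K • h j := by
          exact nsmul_le_nsmul_left (hpos j) hcard
      _ = K * h j := by simp [nsmul_eq_mul]
  calc ∑ j ∈ Finset.range T, ∑ t ∈ Finset.range T, (if j ∈ Finset.Ico (τ t) t then h j else 0)
        ≤ ∑ j ∈ Finset.range T, K * h j := Finset.sum_le_sum step2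
    _ = K * ∑ j ∈ Finset.range T, h j := by rw [Finset.mul_sum]

set_option maxHeartbeats 1000000 in
/-- Telescoped gradient-sum bound: under the strong growth condition (Assumption 3) with
stepsize η = 1/(3KLρ), combining the descent inequality
`e_{t+1} ≤ e_t - (η/3) h_t + (2η/3) L² V_t` with the consensus bound
`V_t ≤ 3η²Kρ ∑_{j=τ(t)}^{t-1} h_j` yields
`(1/3) η ∑_{t<T} h_t ≤ e₀ + (2/9) η ∑_{t<T} h_t`, and therefore
`(1/T) ∑_{t<T} h_t ≤ 27KLρ e₀ / T`. -/
theorem local_sgd_nonconvex_telescoped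
    {d n : ℕ} (hn : 0 < n)
    {Ω S : Type*} [MeasurableSpace Ω] [MeasurableSpace S]
    -- underlying probability space
    (P : Measure Ω) [IsProbabilityMeasure P]
    -- local sample distributions
    (D : Fin n → Measure S) (hD : ∀ i, IsProbabilityMeasure (D i))
    -- sample loss functions and their (stochastic) gradients
    (F : Fin n → EuclideanSpace ℝ (Fin d) → S → ℝ)
    (g : Fin n → EuclideanSpace ℝ (Fin d) → S → EuclideanSpace ℝ (Fin d))
    (L : ℝ) (hL : 0 < L)
    -- g i x s is the gradient of the sample loss F i · s at x
    (hgrad : ∀ i s x, HasGradientAt (fun y => F i y s) (g i x s) x)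
    (hgmeas : ∀ i, Measurable (fun p : EuclideanSpace ℝ (Fin d) × S => g i p.1 p.2))
    -- each sample loss is L-smooth
    (hsmooth : ∀ i s x y, ‖g i x s - g i y s‖ ≤ L * ‖x - y‖)
    -- integrability of the sample losses
    (hFint : ∀ i x, Integrable (fun s => F i x s) (D i))
    -- local objectives fᵢ(x) = E_{ξᵢ ∼ Dᵢ}[F i x ξᵢ] and global objective f
    (fi : Fin n → EuclideanSpace ℝ (Fin d) → ℝ)
    (hfi : ∀ i x, fi i x = ∫ s, F i x s ∂(D i))
    (f : EuclideanSpace ℝ (Fin d) → ℝ)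
    (hf : ∀ x, f x = (n : ℝ)⁻¹ * ∑ i, fi i x)
    -- gradient of the global objective
    (gradf : EuclideanSpace ℝ (Fin d) → EuclideanSpace ℝ (Fin d))
    (hgradf : ∀ x, HasGradientAt f (gradf x) x)
    -- f is bounded below by f*
    (fstar : ℝ) (hbdd : ∀ x, fstar ≤ f x)
    -- Assumption 3: strong growth condition with constant ρ ≥ 1
    (ρ : ℝ) (hρ : 1 ≤ ρ)
    (hSGC : ∀ i x, ∫ s, ‖g i x s‖ ^ 2 ∂(D i) ≤ ρ * ‖gradf x‖ ^ 2)
    -- Local SGD: K ≥ 2 local steps per round, R rounds, T = RK total iterations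
    (K R T : ℕ) (hK : 0 < K) (hR : 0 < R) (hT : T = R * K)
    -- stepsize η = 1/(3KLρ)
    (η : ℝ) (hη : η = 1 / (3 * K * L * ρ))
    -- i.i.d. samples ξᵢ⁽ᵗ⁾ ∼ Dᵢ, independent across nodes and iterations
    (ξ : Fin n → ℕ → Ω → S)
    (hξmeas : ∀ i t, Measurable (ξ i t))
    (hindep : iIndepFun (fun p : Fin n × ℕ => ξ p.1 p.2) P)
    (hdist : ∀ i t, P.map (ξ i t) = D i)
    -- the Local SGD iterates: common initialization, local steps, averaging at times in I
    (X : ℕ → Fin n → Ω → EuclideanSpace ℝ (Fin d))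
    (x0 : EuclideanSpace ℝ (Fin d))
    (hX0 : ∀ i ω, X 0 i ω = x0)
    (hXrec : ∀ t i ω,
      X (t + 1) i ω =
        if (t + 1) % K = 0 then
          (n : ℝ)⁻¹ • ∑ j, (X t j ω - η • g j (X t j ω) (ξ j t ω))
        else X t i ω - η • g i (X t i ω) (ξ i t ω))
    -- the average iterate, expected optimality gap, expected gradient norm and
    -- expected consensus error
    (xbar : ℕ → Ω → EuclideanSpace ℝ (Fin d))
    (hxbar : ∀ t ω, xbar t ω = (n : ℝ)⁻¹ • ∑ i, X t i ω)
    (e h V : ℕ → ℝ)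
    (he : ∀ t, e t = (∫ ω, f (xbar t ω) ∂P) - fstar)
    (hh : ∀ t, h t = ∫ ω, ‖gradf (xbar t ω)‖ ^ 2 ∂P)
    (hV : ∀ t, V t = (n : ℝ)⁻¹ * ∑ i, ∫ ω, ‖X t i ω - xbar t ω‖ ^ 2 ∂P)
    -- τ(t): the last communication time at or before t
    (τ : ℕ → ℕ) (hτ : ∀ t, τ t = K * (t / K))
    -- the descent inequality (Lemma 5)
    (hdescent : ∀ t : ℕ, e (t + 1) ≤ e t - η / 3 * h t + 2 * η / 3 * L ^ 2 * V t)
    -- the consensus bound (Lemma 6)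
    (hcons : ∀ t : ℕ, V t ≤ 3 * η ^ 2 * K * ρ * ∑ j ∈ Finset.Ico (τ t) t, h j) :
    1 / 3 * η * ∑ t ∈ Finset.range T, h t
        ≤ e 0 + 2 / 9 * η * ∑ t ∈ Finset.range T, h t ∧
      1 / T * ∑ t ∈ Finset.range T, h t ≤ 27 * K * L * ρ * e 0 / T := by
  -- basic positivity
  have hρ0 : (0:ℝ) < ρ := lt_of_lt_of_le one_pos hρ
  have hK0 : (0:ℝ) < (K:ℝ) := by exact_mod_cast hK
  have hn0 : (0:ℝ) < (n:ℝ) := by exact_mod_cast hn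
  have hη0 : 0 < η := by rw [hη]; positivity
  have hT1 : 0 < T := by rw [hT]; exact Nat.mul_pos hR hK
  -- measurability of sample gradients at fixed x
  have hgmeas' : ∀ i (x : EuclideanSpace ℝ (Fin d)), Measurable (fun s => g i x s) := by
    intro i x
    exact (hgmeas i).comp (measurable_const.prodMk measurable_id)
  -- L¹ bound for the sample gradients
  have hgint : ∀ i x, Integrable (fun s => g i x s) (D i) := by
    intro i x
    haveI := hD i
    set α : S → ℝ := fun s => ∑ k : Fin d,
      (|F i x s - F i (x + EuclideanSpace.single k 1) s| +
       |F i x s - F i (x - EuclideanSpace.single k 1) s| + L / 2) with hα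
    have hαint : Integrable α (D i) := by
      apply integrable_finset_sum
      intro k _
      exact (((hFint i x).sub (hFint i _)).abs.add ((hFint i x).sub (hFint i _)).abs).add
        (integrable_const _)
    refine hαint.mono' ((hgmeas' i x).aestronglyMeasurable) (Filter.Eventually.of_forall fun s => ?_)
    have hdesc := lip_descent (fun y => F i y s) (fun y => g i y s) L (hgrad i s) (hsmooth i s)
    have hcoord : ∀ k : Fin d, |g i x s k| ≤
        |F i x s - F i (x + EuclideanSpace.single k 1) s| +
        |F i x s - F i (x - EuclideanSpace.single k 1) s| + L / 2 := by
      intro k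
      have h1 := hdesc x (x + EuclideanSpace.single k 1)
      have h2 := hdesc x (x - EuclideanSpace.single k 1)
      have hs1 : (x + EuclideanSpace.single k 1) - x = EuclideanSpace.single k (1:ℝ) := by
        abel
      have hs2 : (x - EuclideanSpace.single k 1) - x = -EuclideanSpace.single k (1:ℝ) := by
        abel
      rw [hs1] at h1
      rw [hs2] at h2
      have hn1 : ‖EuclideanSpace.single k (1:ℝ)‖ = 1 := by
        rw [EuclideanSpace.norm_single]; norm_num
      have hip : ⟪g i x s, EuclideanSpace.single k (1:ℝ)⟫ = g i x s k := by
        rw [EuclideanSpace.inner_single_right]; simp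
      have hip2 : ⟪g i x s, -EuclideanSpace.single k (1:ℝ)⟫ = -(g i x s k) := by
        rw [inner_neg_right, hip]
      rw [hip, hn1] at h1
      rw [hip2] at h2
      rw [norm_neg, hn1] at h2
      beta_reduce at h1 h2
      rw [abs_le]
      constructor
      · have := le_abs_self (F i x s - F i (x + EuclideanSpace.single k 1) s)
        have := abs_nonneg (F i x s - F i (x - EuclideanSpace.single k 1) s)
        nlinarith [h1]
      · have := le_abs_self (F i x s - F i (x - EuclideanSpace.single k 1) s)
        have := abs_nonneg (F i x s - F i (x + EuclideanSpace.single k 1) s)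
        nlinarith [h2]
    have hnorm : ‖g i x s‖ ≤ ∑ k : Fin d, |g i x s k| := by
      rw [EuclideanSpace.norm_eq]
      have hsq : ∑ k : Fin d, ‖g i x s k‖ ^ 2 ≤ (∑ k : Fin d, |g i x s k|) ^ 2 := by
        have hstep : ∀ k ∈ Finset.univ, ‖g i x s k‖ ^ 2
            ≤ |g i x s k| * ∑ j : Fin d, |g i x s j| := by
          intro k _
          have h1 : |g i x s k| ≤ ∑ j : Fin d, |g i x s j| :=
            Finset.single_le_sum (f := fun j => |g i x s j|)
              (fun j _ => abs_nonneg _) (Finset.mem_univ k)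
          have h2 : ‖g i x s k‖ = |g i x s k| := Real.norm_eq_abs _
          rw [h2, sq_abs]
          nlinarith [abs_nonneg (g i x s k), sq_abs (g i x s k)]
        calc ∑ k : Fin d, ‖g i x s k‖ ^ 2
            ≤ ∑ k : Fin d, |g i x s k| * ∑ j : Fin d, |g i x s j| :=
              Finset.sum_le_sum hstep
          _ = (∑ k : Fin d, |g i x s k|) ^ 2 := by rw [← Finset.sum_mul]; ring
      calc Real.sqrt (∑ k : Fin d, ‖g i x s k‖ ^ 2)
          ≤ Real.sqrt ((∑ k : Fin d, |g i x s k|) ^ 2) := Real.sqrt_le_sqrt hsq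
        _ = ∑ k : Fin d, |g i x s k| :=
            Real.sqrt_sq (Finset.sum_nonneg fun k _ => abs_nonneg _)
    calc ‖g i x s‖ ≤ ∑ k : Fin d, |g i x s k| := hnorm
      _ ≤ α s := Finset.sum_le_sum fun k _ => hcoord k
  -- mean local and global gradients
  set Gi : Fin n → EuclideanSpace ℝ (Fin d) → EuclideanSpace ℝ (Fin d) :=
    fun i x => ∫ s, g i x s ∂(D i) with hGi
  set Gavg : EuclideanSpace ℝ (Fin d) → EuclideanSpace ℝ (Fin d) :=
    fun x => (n : ℝ)⁻¹ • ∑ i, Gi i x with hGavg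
  have hGiLip : ∀ i x y, ‖Gi i x - Gi i y‖ ≤ L * ‖x - y‖ := by
    intro i x y
    haveI := hD i
    have hsub : Gi i x - Gi i y = ∫ s, (g i x s - g i y s) ∂(D i) := by
      rw [hGi]
      exact (integral_sub (hgint i x) (hgint i y)).symm
    rw [hsub]
    calc ‖∫ s, (g i x s - g i y s) ∂(D i)‖
        ≤ ∫ s, ‖g i x s - g i y s‖ ∂(D i) := norm_integral_le_integral_norm _
      _ ≤ ∫ _ : S, L * ‖x - y‖ ∂(D i) := by
          apply integral_mono ((hgint i x).sub (hgint i y)).norm (integrable_const _)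
          exact fun s => hsmooth i s x y
      _ = L * ‖x - y‖ := by simp
  have hfiupper : ∀ i x y, fi i y ≤ fi i x + ⟪Gi i x, y - x⟫ + L / 2 * ‖y - x‖ ^ 2 := by
    intro i x y
    haveI := hD i
    have hptwise : ∀ s, F i y s ≤ F i x s + ⟪g i x s, y - x⟫ + L / 2 * ‖y - x‖ ^ 2 :=
      fun s => lip_descent (fun z => F i z s) (fun z => g i z s) L (hgrad i s) (hsmooth i s) x y
    have hinner_int : Integrable (fun s => ⟪g i x s, y - x⟫) (D i) := by
      have heq : (fun s => ⟪g i x s, y - x⟫)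
          = fun s => ((innerSL ℝ (E := EuclideanSpace ℝ (Fin d))).flip (y - x)) (g i x s) := by
        funext s
        rfl
      rw [heq]
      exact ContinuousLinearMap.integrable_comp _ (hgint i x)
    have hRint : Integrable
        (fun s => F i x s + ⟪g i x s, y - x⟫ + L / 2 * ‖y - x‖ ^ 2) (D i) :=
      ((hFint i x).add hinner_int).add (integrable_const _)
    have hfg : Integrable (fun s => F i x s + ⟪g i x s, y - x⟫) (D i) :=
      (hFint i x).add hinner_int
    have hint := integral_mono (hFint i y) hRint hptwise
    rw [hfi i y]
    calc (∫ s, F i y s ∂(D i))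
        ≤ ∫ s, (F i x s + ⟪g i x s, y - x⟫ + L / 2 * ‖y - x‖ ^ 2) ∂(D i) := hint
      _ = (∫ s, F i x s ∂(D i)) + (∫ s, ⟪g i x s, y - x⟫ ∂(D i)) + L / 2 * ‖y - x‖ ^ 2 := by
          rw [integral_add hfg (integrable_const _),
            integral_add (hFint i x) hinner_int]
          simp
      _ = fi i x + ⟪Gi i x, y - x⟫ + L / 2 * ‖y - x‖ ^ 2 := by
          rw [hfi i x]
          congr 1
          congr 1
          have : ∀ s, ⟪g i x s, y - x⟫ = ⟪y - x, g i x s⟫ := fun s => real_inner_comm _ _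
          simp_rw [this]
          rw [integral_inner (hgint i x)]
          exact real_inner_comm _ _
  have hfilower : ∀ i x y, fi i x + ⟪Gi i x, y - x⟫ - 3 * L / 2 * ‖y - x‖ ^ 2 ≤ fi i y := by
    intro i x y
    have h1 := hfiupper i y x
    -- fi i x ≤ fi i y + ⟪Gi i y, x - y⟫ + L/2 ‖x-y‖²
    have h2 : ⟪Gi i y, x - y⟫ = -⟪Gi i y, y - x⟫ := by
      rw [← inner_neg_right]; congr 1; abel
    have h3 : ⟪Gi i y, y - x⟫ ≥ ⟪Gi i x, y - x⟫ - L * ‖y - x‖ ^ 2 := by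
      have h4 : -(L * ‖y - x‖ ^ 2) ≤ ⟪Gi i y - Gi i x, y - x⟫ := by
        have h5 : |⟪Gi i y - Gi i x, y - x⟫| ≤ ‖Gi i y - Gi i x‖ * ‖y - x‖ :=
          abs_real_inner_le_norm _ _
        have h6 : ‖Gi i y - Gi i x‖ * ‖y - x‖ ≤ L * ‖y - x‖ * ‖y - x‖ :=
          mul_le_mul_of_nonneg_right (hGiLip i y x) (norm_nonneg _)
        have h8 : L * ‖y - x‖ * ‖y - x‖ = L * ‖y - x‖ ^ 2 := by ring
        have h9 := neg_abs_le ⟪Gi i y - Gi i x, y - x⟫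
        linarith
      rw [inner_sub_left] at h4
      linarith
    have hxy : ‖x - y‖ = ‖y - x‖ := norm_sub_rev _ _
    rw [h2, hxy] at h1
    linarith
  have hIn : ∀ x v, ⟪Gavg x, v⟫ = (n : ℝ)⁻¹ * ∑ i, ⟪Gi i x, v⟫ := by
    intro x v
    rw [hGavg]
    beta_reduce
    rw [real_inner_smul_left, sum_inner]
  have hnne : (n : ℝ) ≠ 0 := ne_of_gt hn0
  have hfupper : ∀ x y, f y ≤ f x + ⟪Gavg x, y - x⟫ + L / 2 * ‖y - x‖ ^ 2 := by
    intro x y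
    rw [hf y, hf x, hIn]
    have hsumle : ∑ i, fi i y
        ≤ ∑ i, (fi i x + ⟪Gi i x, y - x⟫ + L / 2 * ‖y - x‖ ^ 2) :=
      Finset.sum_le_sum fun i _ => hfiupper i x y
    have hsplit : ∑ i, (fi i x + ⟪Gi i x, y - x⟫ + L / 2 * ‖y - x‖ ^ 2)
        = ∑ i, fi i x + ∑ i, ⟪Gi i x, y - x⟫ + (n : ℝ) * (L / 2 * ‖y - x‖ ^ 2) := by
      rw [Finset.sum_add_distrib, Finset.sum_add_distrib, Finset.sum_const,
        Finset.card_univ, Fintype.card_fin, nsmul_eq_mul]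
    calc (n : ℝ)⁻¹ * ∑ i, fi i y
        ≤ (n : ℝ)⁻¹ * ∑ i, (fi i x + ⟪Gi i x, y - x⟫ + L / 2 * ‖y - x‖ ^ 2) :=
          mul_le_mul_of_nonneg_left hsumle (by positivity)
      _ = (n : ℝ)⁻¹ * ∑ i, fi i x + (n : ℝ)⁻¹ * ∑ i, ⟪Gi i x, y - x⟫
            + L / 2 * ‖y - x‖ ^ 2 := by
          rw [hsplit]; field_simp
  have hflower : ∀ x y, f x + ⟪Gavg x, y - x⟫ - 3 * L / 2 * ‖y - x‖ ^ 2 ≤ f y := by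
    intro x y
    rw [hf y, hf x, hIn]
    have hsumle : ∑ i, (fi i x + ⟪Gi i x, y - x⟫ - 3 * L / 2 * ‖y - x‖ ^ 2)
        ≤ ∑ i, fi i y :=
      Finset.sum_le_sum fun i _ => by
        have := hfilower i x y; linarith
    have hsplit : ∑ i, (fi i x + ⟪Gi i x, y - x⟫ - 3 * L / 2 * ‖y - x‖ ^ 2)
        = ∑ i, fi i x + ∑ i, ⟪Gi i x, y - x⟫ - (n : ℝ) * (3 * L / 2 * ‖y - x‖ ^ 2) := by
      rw [Finset.sum_sub_distrib, Finset.sum_add_distrib, Finset.sum_const,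
        Finset.card_univ, Fintype.card_fin, nsmul_eq_mul]
    calc (n : ℝ)⁻¹ * ∑ i, fi i x + (n : ℝ)⁻¹ * ∑ i, ⟪Gi i x, y - x⟫
            - 3 * L / 2 * ‖y - x‖ ^ 2
        = (n : ℝ)⁻¹ * ∑ i, (fi i x + ⟪Gi i x, y - x⟫ - 3 * L / 2 * ‖y - x‖ ^ 2) := by
          rw [hsplit]; field_simp
      _ ≤ (n : ℝ)⁻¹ * ∑ i, fi i y := mul_le_mul_of_nonneg_left hsumle (by positivity)
  have hGeq : ∀ x, gradf x = Gavg x := by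
    intro x
    refine grad_eq_of_quad f x (Gavg x) (gradf x) (3 * L / 2) (hgradf x) (fun y => ?_)
    rw [abs_le]
    constructor
    · have := hflower x y
      nlinarith [sq_nonneg ‖y - x‖, hL.le]
    · have := hfupper x y
      nlinarith [sq_nonneg ‖y - x‖, hL.le]
  have hgradLip : ∀ x y, ‖gradf x - gradf y‖ ≤ L * ‖x - y‖ := by
    intro x y
    rw [hGeq x, hGeq y]
    have hdiff : Gavg x - Gavg y = (n : ℝ)⁻¹ • ∑ i, (Gi i x - Gi i y) := by
      rw [hGavg]
      beta_reduce
      rw [← smul_sub, ← Finset.sum_sub_distrib]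
    rw [hdiff, norm_smul, Real.norm_eq_abs, abs_of_nonneg (by positivity : (0:ℝ) ≤ (n:ℝ)⁻¹)]
    calc (n : ℝ)⁻¹ * ‖∑ i, (Gi i x - Gi i y)‖
        ≤ (n : ℝ)⁻¹ * ∑ i, ‖Gi i x - Gi i y‖ :=
          mul_le_mul_of_nonneg_left (norm_sum_le _ _) (by positivity)
      _ ≤ (n : ℝ)⁻¹ * ∑ _i : Fin n, L * ‖x - y‖ :=
          mul_le_mul_of_nonneg_left
            (Finset.sum_le_sum fun i _ => hGiLip i x y) (by positivity)
      _ = L * ‖x - y‖ := by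
          rw [Finset.sum_const, Finset.card_univ, Fintype.card_fin, nsmul_eq_mul]
          field_simp
  have hPL : ∀ x, ‖gradf x‖ ^ 2 ≤ 2 * L * (f x - fstar) := by
    intro x
    have h1 := hfupper x (x - (1/L) • gradf x)
    rw [← hGeq x] at h1
    have hyx : (x - (1/L) • gradf x) - x = -((1/L) • gradf x) := by abel
    rw [hyx] at h1
    have e1 : ⟪gradf x, -((1/L) • gradf x)⟫ = -(1/L * ‖gradf x‖ ^ 2) := by
      rw [inner_neg_right, real_inner_smul_right, real_inner_self_eq_norm_sq]
    have e2 : ‖-((1/L) • gradf x)‖ ^ 2 = (1/L) ^ 2 * ‖gradf x‖ ^ 2 := by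
      rw [norm_neg, norm_smul, Real.norm_eq_abs, mul_pow, sq_abs]
    rw [e1, e2] at h1
    have h2 := hbdd (x - (1/L) • gradf x)
    have hid : -(1/L * ‖gradf x‖ ^ 2) + L / 2 * ((1/L) ^ 2 * ‖gradf x‖ ^ 2)
        = -(1/(2*L) * ‖gradf x‖ ^ 2) := by
      field_simp
      ring
    have h3 : 1/(2*L) * ‖gradf x‖ ^ 2 ≤ f x - fstar := by linarith
    have h4 : ‖gradf x‖ ^ 2 = (2*L) * (1/(2*L) * ‖gradf x‖ ^ 2) := by
      field_simp
    rw [h4]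
    calc (2*L) * (1/(2*L) * ‖gradf x‖ ^ 2) ≤ (2*L) * (f x - fstar) :=
          mul_le_mul_of_nonneg_left h3 (by positivity)
      _ = 2 * L * (f x - fstar) := by ring
  -- continuity and measurability
  have hfcont : Continuous f :=
    Differentiable.continuous (fun x => (hgradf x).differentiableAt)
  have hgfcont : Continuous gradf := by
    have hlip : LipschitzWith (Real.toNNReal L) gradf := by
      apply LipschitzWith.of_dist_le_mul
      intro x y
      rw [Real.coe_toNNReal L hL.le, dist_eq_norm, dist_eq_norm]
      exact hgradLip x y
    exact hlip.continuous
  have hXmeas : ∀ t i, Measurable (fun ω => X t i ω) := by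
    intro t
    induction t with
    | zero =>
      intro i
      have hfun : (fun ω => X 0 i ω) = fun _ => x0 := funext fun ω => hX0 i ω
      rw [hfun]
      exact measurable_const
    | succ t ih =>
      intro i
      by_cases hc : (t + 1) % K = 0
      · have hfun : (fun ω => X (t+1) i ω)
            = fun ω => (n : ℝ)⁻¹ • ∑ j, (X t j ω - η • g j (X t j ω) (ξ j t ω)) :=
          funext fun ω => by rw [hXrec t i ω, if_pos hc]
        rw [hfun]
        refine Measurable.fun_const_smul ?_ _
        refine Finset.measurable_sum _ fun j _ => ?_
        exact (ih j).sub (((hgmeas j).comp ((ih j).prodMk (hξmeas j t))).const_smul η)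
      · have hfun : (fun ω => X (t+1) i ω)
            = fun ω => X t i ω - η • g i (X t i ω) (ξ i t ω) :=
          funext fun ω => by rw [hXrec t i ω, if_neg hc]
        rw [hfun]
        exact (ih i).sub (((hgmeas i).comp ((ih i).prodMk (hξmeas i t))).const_smul η)
  have hxbmeas : ∀ t, Measurable (xbar t) := by
    intro t
    have : xbar t = fun ω => (n : ℝ)⁻¹ • ∑ i, X t i ω := funext fun ω => hxbar t ω
    rw [this]
    exact (Finset.measurable_sum _ fun i _ => hXmeas t i).fun_const_smul _
  -- basic facts about e, h, V
  have he0 : e 0 = f x0 - fstar := by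
    rw [he 0]
    have hx0b : ∀ ω, xbar 0 ω = x0 := fun ω => by
      rw [hxbar 0 ω]
      have hsum : ∑ i : Fin n, X 0 i ω = (n : ℕ) • x0 := by
        rw [Finset.sum_congr rfl fun i _ => hX0 i ω, Finset.sum_const,
          Finset.card_univ, Fintype.card_fin]
      rw [hsum, ← Nat.cast_smul_eq_nsmul ℝ, smul_smul, inv_mul_cancel₀ hnne, one_smul]
    have : (fun ω => f (xbar 0 ω)) = fun _ => f x0 := funext fun ω => by rw [hx0b ω]
    rw [this, integral_const]
    simp
  have he0nn : 0 ≤ e 0 := by rw [he0]; linarith [hbdd x0]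
  have hhnn : ∀ t, 0 ≤ h t := fun t => by
    rw [hh t]; exact integral_nonneg fun ω => sq_nonneg _
  have hVnn : ∀ t, 0 ≤ V t := fun t => by
    rw [hV t]
    exact mul_nonneg (by positivity)
      (Finset.sum_nonneg fun i _ => integral_nonneg fun ω => sq_nonneg _)
  have hfact : ∀ t, (0 ≤ e t ∧ h t ≤ 2 * L * e t) ∨ e t = -fstar := by
    intro t
    by_cases hint : Integrable (fun ω => f (xbar t ω)) P
    · left
      have hge : fstar ≤ ∫ ω, f (xbar t ω) ∂P := by
        have h1 : ∫ (_ : Ω), fstar ∂P ≤ ∫ ω, f (xbar t ω) ∂P :=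
          integral_mono (integrable_const fstar) hint fun ω => hbdd _
        rwa [integral_const, probReal_univ, one_smul] at h1
      have het : 0 ≤ e t := by rw [he t]; linarith
      refine ⟨het, ?_⟩
      have hψmeas : Measurable fun ω => ‖gradf (xbar t ω)‖ ^ 2 :=
        ((hgfcont.measurable.comp (hxbmeas t)).norm).pow_const 2
      have hbnd : Integrable (fun ω => 2 * L * (f (xbar t ω) - fstar)) P :=
        ((hint.sub (integrable_const fstar)).const_mul (2 * L))
      have hψint : Integrable (fun ω => ‖gradf (xbar t ω)‖ ^ 2) P := by
        refine hbnd.mono' hψmeas.aestronglyMeasurable (Filter.Eventually.of_forall fun ω => ?_)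
        rw [Real.norm_eq_abs, abs_of_nonneg (sq_nonneg _)]
        exact hPL (xbar t ω)
      have h2 : ∫ ω, ‖gradf (xbar t ω)‖ ^ 2 ∂P ≤ ∫ ω, 2 * L * (f (xbar t ω) - fstar) ∂P :=
        integral_mono hψint hbnd fun ω => hPL (xbar t ω)
      have h3 : ∫ ω, 2 * L * (f (xbar t ω) - fstar) ∂P
          = 2 * L * ((∫ ω, f (xbar t ω) ∂P) - fstar) := by
        rw [integral_const_mul, integral_sub hint (integrable_const fstar), integral_const]
        simp
      rw [hh t, he t]
      rw [h3] at h2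
      exact h2
    · right
      rw [he t, integral_undef hint]
      ring
  -- surrogate descent
  have hηL : η * L ≤ 1 / 3 := by
    have hK1 : (1:ℝ) ≤ (K:ℝ) := by exact_mod_cast hK
    rw [hη]
    rw [div_mul_eq_mul_div, one_mul, div_le_div_iff₀ (by positivity) (by norm_num)]
    have hKρ : (1:ℝ) ≤ (K:ℝ) * ρ := by nlinarith [hK1, hρ]
    nlinarith [mul_le_mul_of_nonneg_left hKρ (by positivity : (0:ℝ) ≤ 3 * L)]
  have hM : ∀ t, max (e (t+1)) 0 ≤ max (e t) 0 - η / 3 * h t + 2 * η / 3 * L ^ 2 * V t := by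
    intro t
    have hVt := hVnn t
    have hht := hhnn t
    rcases le_or_gt 0 (e (t+1)) with hpos | hneg
    · rw [max_eq_left hpos]
      have h1 := hdescent t
      have h2 := le_max_left (e t) 0
      linarith
    · rw [max_eq_right hneg.le]
      rcases hfact t with ⟨het, hht2⟩ | het
      · rw [max_eq_left het]
        have h3 : η / 3 * h t ≤ η / 3 * (2 * L * e t) :=
          mul_le_mul_of_nonneg_left hht2 (by positivity)
        have h4 : η / 3 * (2 * L * e t) ≤ e t := by
          nlinarith [mul_nonneg (sub_nonneg.2 hηL) het, hη0.le, hL.le, het]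
        have h6 : 0 ≤ 2 * η / 3 * L ^ 2 * V t := by positivity
        linarith
      · have het1 : e (t+1) = -fstar := by
          rcases hfact (t+1) with ⟨hp, _⟩ | hq
          · linarith
          · exact hq
        have h1 := hdescent t
        rw [het, het1] at h1
        have h8 : (0:ℝ) ≤ max (e t) 0 := le_max_right _ _
        linarith
  -- telescoping
  have htel : ∑ t ∈ Finset.range T, (η / 3 * h t - 2 * η / 3 * L ^ 2 * V t) ≤ e 0 := by
    have hstep : ∀ t ∈ Finset.range T,
        η / 3 * h t - 2 * η / 3 * L ^ 2 * V t ≤ max (e t) 0 - max (e (t+1)) 0 :=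
      fun t _ => by have := hM t; linarith
    calc ∑ t ∈ Finset.range T, (η / 3 * h t - 2 * η / 3 * L ^ 2 * V t)
        ≤ ∑ t ∈ Finset.range T, (max (e t) 0 - max (e (t+1)) 0) := Finset.sum_le_sum hstep
      _ = max (e 0) 0 - max (e T) 0 := Finset.sum_range_sub' (fun t => max (e t) 0) T
      _ ≤ e 0 := by
          have h1 := le_max_right (e T) 0
          rw [max_eq_left he0nn]
          linarith
  -- consensus sum
  have hVs : ∑ t ∈ Finset.range T, V t
      ≤ 3 * η ^ 2 * K * ρ * (K * ∑ t ∈ Finset.range T, h t) := by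
    calc ∑ t ∈ Finset.range T, V t
        ≤ ∑ t ∈ Finset.range T, 3 * η ^ 2 * K * ρ * ∑ j ∈ Finset.Ico (τ t) t, h j :=
          Finset.sum_le_sum fun t _ => hcons t
      _ = 3 * η ^ 2 * K * ρ * ∑ t ∈ Finset.range T, ∑ j ∈ Finset.Ico (τ t) t, h j := by
          rw [← Finset.mul_sum]
      _ ≤ 3 * η ^ 2 * K * ρ * (K * ∑ t ∈ Finset.range T, h t) :=
          mul_le_mul_of_nonneg_left (count_aux K T hK τ hτ h hhnn) (by positivity)
  -- put it together
  have hSnn : (0:ℝ) ≤ ∑ t ∈ Finset.range T, h t := Finset.sum_nonneg fun t _ => hhnn t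
  have hLne : L ≠ 0 := ne_of_gt hL
  have hρne : ρ ≠ 0 := ne_of_gt hρ0
  have hKne : (K:ℝ) ≠ 0 := ne_of_gt hK0
  have e1 : ∑ t ∈ Finset.range T, (η / 3 * h t - 2 * η / 3 * L ^ 2 * V t)
      = η / 3 * ∑ t ∈ Finset.range T, h t
        - 2 * η / 3 * L ^ 2 * ∑ t ∈ Finset.range T, V t := by
    rw [Finset.sum_sub_distrib, ← Finset.mul_sum, ← Finset.mul_sum]
  rw [e1] at htel
  have h2 : 2 * η / 3 * L ^ 2 * ∑ t ∈ Finset.range T, V t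
      ≤ 2 * η / 3 * L ^ 2 * (3 * η ^ 2 * K * ρ * (K * ∑ t ∈ Finset.range T, h t)) :=
    mul_le_mul_of_nonneg_left hVs (by positivity)
  have hcoef : 2 * η / 3 * L ^ 2 * (3 * η ^ 2 * (K:ℝ) * ρ * (K:ℝ)) = 2 * η / (9 * ρ) := by
    rw [hη]
    field_simp
    ring
  have h3 : 2 * η / 3 * L ^ 2 * (3 * η ^ 2 * K * ρ * (K * ∑ t ∈ Finset.range T, h t))
      ≤ 2 / 9 * η * ∑ t ∈ Finset.range T, h t := by
    have hstep : 2 * η / 3 * L ^ 2 * (3 * η ^ 2 * (K:ℝ) * ρ * ((K:ℝ) * ∑ t ∈ Finset.range T, h t))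
        = (2 * η / (9 * ρ)) * ∑ t ∈ Finset.range T, h t := by
      rw [← hcoef]; ring
    rw [hstep]
    apply mul_le_mul_of_nonneg_right _ hSnn
    rw [div_le_iff₀ (by positivity : (0:ℝ) < 9 * ρ)]
    nlinarith [hη0.le, hρ]
  have hc1 : 1 / 3 * η * ∑ t ∈ Finset.range T, h t
      ≤ e 0 + 2 / 9 * η * ∑ t ∈ Finset.range T, h t := by
    have : η / 3 * ∑ t ∈ Finset.range T, h t
        ≤ e 0 + 2 / 9 * η * ∑ t ∈ Finset.range T, h t := by linarith
    calc 1 / 3 * η * ∑ t ∈ Finset.range T, h t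
        = η / 3 * ∑ t ∈ Finset.range T, h t := by ring
      _ ≤ e 0 + 2 / 9 * η * ∑ t ∈ Finset.range T, h t := this
  refine ⟨hc1, ?_⟩
  have hS : ∑ t ∈ Finset.range T, h t ≤ 27 * K * L * ρ * e 0 := by
    have h9 : η / 9 * ∑ t ∈ Finset.range T, h t ≤ e 0 := by nlinarith [hc1]
    have hone : (9 / η) * (η / 9) = 1 := by
      field_simp
    have hrw : ∑ t ∈ Finset.range T, h t
        = (9 / η) * (η / 9 * ∑ t ∈ Finset.range T, h t) := by
      rw [← mul_assoc, hone, one_mul]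
    rw [hrw]
    calc (9 / η) * (η / 9 * ∑ t ∈ Finset.range T, h t) ≤ (9 / η) * e 0 :=
          mul_le_mul_of_nonneg_left h9 (by positivity)
      _ = 27 * K * L * ρ * e 0 := by
          rw [hη, one_div, div_inv_eq_mul]
          ring
  have hTpos : (0:ℝ) < (T:ℝ) := by exact_mod_cast hT1
  have hfin : 1 / (T:ℝ) * ∑ t ∈ Finset.range T, h t
      ≤ 1 / (T:ℝ) * (27 * K * L * ρ * e 0) :=
    mul_le_mul_of_nonneg_left hS (by positivity)
  calc 1 / (T:ℝ) * ∑ t ∈ Finset.range T, h t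
      ≤ 1 / (T:ℝ) * (27 * K * L * ρ * e 0) := hfin
    _ = 27 * K * L * ρ * e 0 / (T:ℝ) := by ring
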